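/- Let G be an abelian subgroup of SL(2,ℂ) containing at least one element that is not a scalar multiple of the identity. Then G is unitary if and only if the ℝ-subalgebra A of the 2×2 complex matrices generated by G has real dimension 2. -/

import Mathlib

open Matrix Complex

/-- A subgroup of `SL(2,ℂ)`, viewed as a set of matrices, is *unitary* if it preserves some
nondegenerate Hermitian form `H` under `g ↦ gᴴ H g`. -/
def IsUnitarySubgroup (G : Subgroup (Matrix.SpecialLinearGroup (Fin 2) ℂ)) : Prop :=
  ∃ H : Matrix (Fin 2) (Fin 2) ℂ, H.IsHermitian ∧ H.det ≠ 0 ∧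
    ∀ g ∈ G, (g : Matrix (Fin 2) (Fin 2) ℂ)ᴴ * H * (g : Matrix (Fin 2) (Fin 2) ℂ) = H

local notation "Mat" => Matrix (Fin 2) (Fin 2) ℂ
local notation "SL" => Matrix.SpecialLinearGroup (Fin 2) ℂ


lemma rsmul (a : ℝ) (M : Mat) : a • M = (a : ℂ) • M := by
  ext i j; simp [Matrix.smul_apply, Complex.real_smul]

/-- Cayley–Hamilton for 2×2 determinant-one matrices. -/
lemma ch2 (m : Mat) (hd : m.det = 1) : m * m = m.trace • m - 1 := by
  rw [Matrix.det_fin_two] at hd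
  ext i j
  fin_cases i <;> fin_cases j <;>
    simp [Matrix.mul_apply, Fin.sum_univ_two, Matrix.trace_fin_two, Matrix.smul_apply,
      Matrix.sub_apply, Matrix.one_apply] <;>
    first
      | ring1
      | linear_combination hd
      | linear_combination -hd

/-- determinant of a•1 + b•m -/
lemma det_comb (a b : ℂ) (m : Mat) :
    (a • (1 : Mat) + b • m).det = a * a + a * b * m.trace + b * b * m.det := by
  rw [Matrix.det_fin_two, Matrix.det_fin_two, Matrix.trace_fin_two]
  simp [Matrix.add_apply, Matrix.smul_apply, Matrix.one_apply]
  ring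

/-- centralizer of a nonscalar 2×2 matrix -/
lemma centralizer (m x : Mat) (hns : ∀ c : ℂ, m ≠ c • 1) (hc : x * m = m * x) :
    ∃ α β : ℂ, x = α • 1 + β • m := by
  have e : ∀ i j, (x * m) i j = (m * x) i j := fun i j => by rw [hc]
  have e00 := e 0 0; have e01 := e 0 1; have e10 := e 1 0; have e11 := e 1 1
  simp only [Matrix.mul_apply, Fin.sum_univ_two] at e00 e01 e10 e11
  have key : ∀ α β : ℂ, x 0 0 = α + β * m 0 0 → x 0 1 = β * m 0 1 →
      x 1 0 = β * m 1 0 → x 1 1 = α + β * m 1 1 → ∃ α β : ℂ, x = α • 1 + β • m := by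
    intro α β h1 h2 h3 h4
    refine ⟨α, β, ?_⟩
    ext i j
    fin_cases i <;> fin_cases j <;>
      simp [Matrix.add_apply, Matrix.smul_apply, Matrix.one_apply, h1, h2, h3, h4]
  by_cases hq : m 0 1 ≠ 0
  · refine key (x 0 0 - (x 0 1 / m 0 1) * m 0 0) (x 0 1 / m 0 1) (by ring)
      (div_mul_cancel₀ _ hq).symm ?_ ?_
    · have h : x 0 1 * m 1 0 = m 0 1 * x 1 0 := by linear_combination e00
      rw [div_mul_eq_mul_div, h, mul_div_cancel_left₀ _ hq]
    · have h : x 0 1 * (m 1 1 - m 0 0) = m 0 1 * (x 1 1 - x 0 0) := by linear_combination e01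
      have hb : x 0 1 / m 0 1 * (m 1 1 - m 0 0) = x 1 1 - x 0 0 := by
        rw [div_mul_eq_mul_div, h, mul_div_cancel_left₀ _ hq]
      linear_combination -hb
  · push_neg at hq
    by_cases hr : m 1 0 ≠ 0
    · refine key (x 0 0 - (x 1 0 / m 1 0) * m 0 0) (x 1 0 / m 1 0) (by ring) ?_
        (div_mul_cancel₀ _ hr).symm ?_
      · rw [hq, mul_zero]
        have h01 : x 0 1 * m 1 0 = 0 := by linear_combination e00 + x 1 0 * hq
        exact (mul_eq_zero.mp h01).resolve_right hr
      · have h : x 1 0 * (m 1 1 - m 0 0) = m 1 0 * (x 1 1 - x 0 0) := by linear_combination -e10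
        have hb : x 1 0 / m 1 0 * (m 1 1 - m 0 0) = x 1 1 - x 0 0 := by
          rw [div_mul_eq_mul_div, h, mul_div_cancel_left₀ _ hr]
        linear_combination -hb
    · push_neg at hr
      by_cases hps : m 0 0 = m 1 1
      · exact absurd (by ext i j; fin_cases i <;> fin_cases j <;>
          simp [Matrix.smul_apply, Matrix.one_apply, hq, hr, hps]) (hns (m 0 0))
      · have hd : m 1 1 - m 0 0 ≠ 0 := sub_ne_zero.mpr (Ne.symm hps)
        have hd' : m 0 0 - m 1 1 ≠ 0 := sub_ne_zero.mpr hps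
        refine key (x 0 0 - ((x 0 0 - x 1 1) / (m 0 0 - m 1 1)) * m 0 0)
          ((x 0 0 - x 1 1) / (m 0 0 - m 1 1)) (by ring) ?_ ?_ ?_
        · rw [hq, mul_zero]
          have h01 : x 0 1 * (m 1 1 - m 0 0) = 0 := by
            linear_combination e01 - x 0 0 * hq + x 1 1 * hq
          exact (mul_eq_zero.mp h01).resolve_right hd
        · rw [hr, mul_zero]
          have h10 : x 1 0 * (m 0 0 - m 1 1) = 0 := by
            linear_combination e10 + x 0 0 * hr - x 1 1 * hr
          exact (mul_eq_zero.mp h10).resolve_right hd'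
        · have h : (x 0 0 - x 1 1) * (m 1 1 - m 0 0) = (m 0 0 - m 1 1) * (x 1 1 - x 0 0) := by
            ring
          have hb : (x 0 0 - x 1 1) / (m 0 0 - m 1 1) * (m 1 1 - m 0 0) = x 1 1 - x 0 0 := by
            rw [div_mul_eq_mul_div, h, mul_div_cancel_left₀ _ hd']
          linear_combination -hb

lemma gsum (g H : Mat) (t : ℂ) (hch : g * g = t • g - 1) (hH : gᴴ * H * g = H) :
    gᴴ * H = t • H - H * g := by
  have hinv : g * (t • (1:Mat) - g) = 1 := by
    rw [mul_sub, mul_smul_comm, mul_one, hch]; abel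
  have h2 := congrArg (fun M => M * (t • (1:Mat) - g)) hH
  rw [mul_assoc (gᴴ * H) g _, hinv, mul_one] at h2
  rw [h2, mul_sub, mul_smul_comm, mul_one]

lemma unit_extend (g H : Mat) (t a b : ℂ) (hch : g * g = t • g - 1)
    (hH : gᴴ * H * g = H) (ha : starRingEnd ℂ a = a) (hb : starRingEnd ℂ b = b)
    (hdet : a * a + a * b * t + b * b = 1) :
    (a • (1:Mat) + b • g)ᴴ * H * (a • (1:Mat) + b • g) = H := by
  have hgH : gᴴ * H = t • H - H * g := gsum g H t hch hH
  have hct : (a • (1:Mat) + b • g)ᴴ = a • (1:Mat) + b • gᴴ := by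
    simp [conjTranspose_add, conjTranspose_smul, conjTranspose_one, Complex.star_def, ha, hb]
  rw [hct]
  have expand : (a • (1:Mat) + b • gᴴ) * H * (a • (1:Mat) + b • g)
      = (a*a) • H + (a*b) • (H*g) + (a*b) • (gᴴ*H) + (b*b) • (gᴴ*H*g) := by
    simp only [add_mul, mul_add, smul_mul_assoc, mul_smul_comm, mul_one, one_mul, smul_smul,
      mul_assoc]
    module
  rw [expand, hH, hgH]
  match_scalars <;> first | linear_combination hdet | ring1


lemma trace_real_of_unitary (H : Mat) (hdet : H.det ≠ 0)
    (h : Matrix.SpecialLinearGroup (Fin 2) ℂ)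
    (hh : (h : Mat)ᴴ * H * (h : Mat) = H) :
    starRingEnd ℂ (Matrix.trace (h : Mat)) = Matrix.trace (h : Mat) := by
  have hH : IsUnit H.det := isUnit_iff_ne_zero.mpr hdet
  have hhinv : (h : Mat) * ((h⁻¹ : Matrix.SpecialLinearGroup (Fin 2) ℂ) : Mat) = 1 := by
    rw [← Matrix.SpecialLinearGroup.coe_mul, mul_inv_cancel]
    simp
  have h1 : (h : Mat)ᴴ * H = H * ((h⁻¹ : Matrix.SpecialLinearGroup (Fin 2) ℂ) : Mat) := by
    have h0 := congrArg (fun M => M * ((h⁻¹ : Matrix.SpecialLinearGroup (Fin 2) ℂ) : Mat)) hh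
    rwa [mul_assoc ((h : Mat)ᴴ * H) _ _, hhinv, mul_one] at h0
  have h2 : (h : Mat)ᴴ = H * ((h⁻¹ : Matrix.SpecialLinearGroup (Fin 2) ℂ) : Mat) * H⁻¹ := by
    have h0 := congrArg (fun M => M * H⁻¹) h1
    rwa [mul_assoc ((h : Mat)ᴴ) _ _, Matrix.mul_nonsing_inv H hH, mul_one] at h0
  have h3 : Matrix.trace ((h : Mat)ᴴ)
      = Matrix.trace ((h⁻¹ : Matrix.SpecialLinearGroup (Fin 2) ℂ) : Mat) := by
    rw [h2, Matrix.trace_mul_cycle, Matrix.nonsing_inv_mul H hH, one_mul]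
  rw [Matrix.trace_conjTranspose, Complex.star_def] at h3
  rw [h3]
  simp [Matrix.SpecialLinearGroup.coe_inv, Matrix.adjugate_fin_two, Matrix.trace_fin_two]
  ring

lemma exists_H (g : Mat) (hdet : g.det = 1) (hns : ∀ c : ℂ, g ≠ c • 1)
    (ht : starRingEnd ℂ g.trace = g.trace) :
    ∃ H : Mat, H.IsHermitian ∧ H.det ≠ 0 ∧ gᴴ * H * g = H := by
  have hdet2 : g 0 0 * g 1 1 - g 0 1 * g 1 0 = 1 := by
    rw [← Matrix.det_fin_two]; exact hdet
  by_cases hherm : gᴴ = g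
  · -- g Hermitian
    have hr' : starRingEnd ℂ (g 0 1) = g 1 0 := by
      have := congrFun (congrFun hherm 1) 0; simpa [Matrix.conjTranspose_apply] using this
    by_cases hq : g 0 1 = 0
    · have hr : g 1 0 = 0 := by rw [← hr', hq, map_zero]
      refine ⟨!![0, 1; 1, 0], ?_, ?_, ?_⟩
      · ext i j
        fin_cases i <;> fin_cases j <;> simp [Matrix.conjTranspose_apply]
      · rw [Matrix.det_fin_two]
        simp
      · rw [hherm]
        ext i j
        fin_cases i <;> fin_cases j <;>
          simp [Matrix.mul_apply, Fin.sum_univ_two, hq, hr] <;>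
          first
            | linear_combination hdet2
            | linear_combination -hdet2
            | linear_combination hdet2 + g 1 1 * hq + g 0 0 * hq
            | linear_combination hdet2 + g 1 0 * hq
            | linear_combination (-(g 0 0) - g 1 1 + g 1 0) * hq
            | linear_combination hdet2 + (g 0 0 + g 1 1) * hq
            | linear_combination -hdet2 - (g 0 0 + g 1 1) * hq
            | linear_combination 2*hdet2 + (g 0 0 + g 1 1 + g 1 0) * hq
            | linear_combination 2*hdet2 + (g 0 0 + g 1 1 - g 1 0) * hq
    · have hq' : starRingEnd ℂ (g 1 0) = g 0 1 := by
        rw [← hr', Complex.conj_conj]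
      have hr0 : g 1 0 ≠ 0 := fun hcc => hq (by rw [← hq', hcc, map_zero])
      refine ⟨!![0, Complex.I * g 0 1; -Complex.I * g 1 0, 0], ?_, ?_, ?_⟩
      · ext i j
        fin_cases i <;> fin_cases j <;>
          simp [Matrix.conjTranspose_apply, Complex.star_def, Complex.conj_I, hq', hr'] <;>
          first
            | ring1
            | (rw [map_mul, ← hq']; ring1)
            | (rw [map_mul, map_neg, map_mul, hq']; ring1)
            | (rw [map_mul, map_neg, map_mul, hr']; ring1)
      · rw [Matrix.det_fin_two_of]
        have hval : (0:ℂ) * 0 - Complex.I * g 0 1 * (-Complex.I * g 1 0)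
            = -(g 0 1 * g 1 0) := by
          linear_combination (g 0 1 * g 1 0) * Complex.I_mul_I
        rw [hval]
        exact neg_ne_zero.mpr (mul_ne_zero hq hr0)
      · rw [hherm]
        ext i j
        fin_cases i <;> fin_cases j <;>
          simp [Matrix.mul_apply, Fin.sum_univ_two] <;>
          first
            | ring1
            | linear_combination (Complex.I * g 0 1) * hdet2
            | linear_combination (-Complex.I * g 0 1) * hdet2
            | linear_combination (Complex.I * g 1 0) * hdet2
            | linear_combination (-Complex.I * g 1 0) * hdet2
  · -- g not Hermitian
    refine ⟨Complex.I • (g - gᴴ), ?_, ?_, ?_⟩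
    · unfold Matrix.IsHermitian
      rw [Matrix.conjTranspose_smul, Matrix.conjTranspose_sub, Matrix.conjTranspose_conjTranspose,
        Complex.star_def, Complex.conj_I]
      module
    · -- determinant nonzero
      have htr : starRingEnd ℂ (g 0 0) + starRingEnd ℂ (g 1 1) = g 0 0 + g 1 1 := by
        have := ht
        rw [Matrix.trace_fin_two, map_add] at this
        exact this
      have hsubdet : (g - gᴴ).det =
          ((2 * (g 0 0).im) ^ 2 + Complex.normSq (g 0 1 - starRingEnd ℂ (g 1 0)) : ℝ) := by
        rw [Matrix.det_fin_two]
        simp only [Matrix.sub_apply, Matrix.conjTranspose_apply, Complex.star_def]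
        have e1 : g 0 0 - starRingEnd ℂ (g 0 0) = (2 * (g 0 0).im : ℝ) * Complex.I :=
          Complex.sub_conj _
        have e2 : g 1 1 - starRingEnd ℂ (g 1 1) = -((2 * (g 0 0).im : ℝ) * Complex.I) := by
          rw [← e1]; linear_combination -htr
        have e3 : g 1 0 - starRingEnd ℂ (g 0 1)
            = -(starRingEnd ℂ (g 0 1 - starRingEnd ℂ (g 1 0))) := by
          simp only [map_sub, Complex.conj_conj]; ring
        rw [e1, e2, e3]
        have e4 : (g 0 1 - starRingEnd ℂ (g 1 0)) * starRingEnd ℂ (g 0 1 - starRingEnd ℂ (g 1 0))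
            = (Complex.normSq (g 0 1 - starRingEnd ℂ (g 1 0)) : ℝ) := Complex.mul_conj _
        push_cast
        linear_combination e4 - ((2:ℂ) * (g 0 0).im)^2 * Complex.I_mul_I
      rw [Matrix.det_smul]
      intro hcon
      rw [mul_eq_zero] at hcon
      rcases hcon with hcon | hcon
      · simp [pow_eq_zero_iff, Complex.I_ne_zero] at hcon
      · rw [hsubdet, Complex.ofReal_eq_zero] at hcon
        have h1 : (2 * (g 0 0).im) ^ 2 = 0 ∧ Complex.normSq (g 0 1 - starRingEnd ℂ (g 1 0)) = 0 := by
          constructor <;> nlinarith [Complex.normSq_nonneg (g 0 1 - starRingEnd ℂ (g 1 0)),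
            sq_nonneg (2 * (g 0 0).im)]
        have him : (g 0 0).im = 0 := by
          have := h1.1; nlinarith [this]
        have hw : g 0 1 - starRingEnd ℂ (g 1 0) = 0 := by
          exact Complex.normSq_eq_zero.mp h1.2
        apply hherm
        have hp : starRingEnd ℂ (g 0 0) = g 0 0 := Complex.conj_eq_iff_im.mpr him
        have hs : starRingEnd ℂ (g 1 1) = g 1 1 := by linear_combination htr - hp
        have hq : g 0 1 = starRingEnd ℂ (g 1 0) := by linear_combination hw
        ext i j
        fin_cases i <;> fin_cases j <;> simp [Matrix.conjTranspose_apply, Complex.star_def] <;>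
          first
            | exact hp
            | exact hs
            | rw [hq, Complex.conj_conj]
            | rw [hq]
    · have hch : g * g = g.trace • g - 1 := ch2 g hdet
      have hdetH : (gᴴ).det = 1 := by rw [Matrix.det_conjTranspose, hdet]; simp
      have hch' : gᴴ * gᴴ = g.trace • gᴴ - 1 := by
        have := ch2 gᴴ hdetH
        rwa [Matrix.trace_conjTranspose, Complex.star_def, ht] at this
      rw [mul_smul_comm, smul_mul_assoc]
      congr 1
      have e1 : gᴴ * (g - gᴴ) * g = gᴴ * (g * g) - gᴴ * gᴴ * g := by noncomm_ring
      rw [e1, hch, hch', mul_sub, sub_mul, mul_smul_comm, smul_mul_assoc, mul_one, one_mul]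
      abel

lemma span_pair_mul_closed (g : Mat) (hdet : g.det = 1)
    (ht : starRingEnd ℂ g.trace = g.trace) :
    ∀ x y : Mat, x ∈ Submodule.span ℝ {(1 : Mat), g} → y ∈ Submodule.span ℝ {(1 : Mat), g} →
      x * y ∈ Submodule.span ℝ {(1 : Mat), g} := by
  have hch := ch2 g hdet
  have htre : ((g.trace.re : ℝ) : ℂ) = g.trace := Complex.conj_eq_iff_re.mp ht
  intro x y hx hy
  obtain ⟨a, b, hx⟩ := Submodule.mem_span_pair.mp hx
  obtain ⟨c, d, hy⟩ := Submodule.mem_span_pair.mp hy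
  apply Submodule.mem_span_pair.mpr
  refine ⟨a * c - b * d, a * d + b * c + b * d * g.trace.re, ?_⟩
  rw [← hx, ← hy]
  rw [rsmul, rsmul, rsmul, rsmul, rsmul, rsmul]
  have expand : ((a:ℂ) • (1:Mat) + (b:ℂ) • g) * ((c:ℂ) • (1:Mat) + (d:ℂ) • g)
      = ((a*c : ℂ)) • (1:Mat) + ((a*d + b*c : ℂ)) • g + ((b*d : ℂ)) • (g * g) := by
    simp only [add_mul, mul_add, smul_mul_assoc, mul_smul_comm, mul_one, one_mul, smul_smul]
    module
  rw [expand, hch]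
  match_scalars <;> push_cast <;>
    first
      | ring1
      | linear_combination ((b:ℂ)*(d:ℂ)) * htre
      | linear_combination (-(b:ℂ)*(d:ℂ)) * htre

lemma finrank_span_pair (g : Mat) (hns : ∀ c : ℂ, g ≠ c • 1) :
    Module.finrank ℝ ↥(Submodule.span ℝ {(1 : Mat), g}) = 2 := by
  have hli : LinearIndependent ℝ ![(1 : Mat), g] := by
    rw [LinearIndependent.pair_iff]
    intro s t hst
    have ht0 : t = 0 := by
      by_contra ht0
      have h2 : (-s) • (1:Mat) = t • g := by
        rw [neg_smul]
        exact neg_eq_iff_add_eq_zero.mpr hst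
      exact hns ((t⁻¹ * (-s) : ℝ) : ℂ)
        (by rw [← rsmul, ← smul_smul, h2, inv_smul_smul₀ ht0])
    refine ⟨?_, ht0⟩
    rw [ht0, zero_smul, add_zero] at hst
    have := smul_eq_zero.mp hst
    exact this.resolve_right one_ne_zero
  have hcard := finrank_span_eq_card hli
  have hrange : Set.range ![(1 : Mat), g] = {(1 : Mat), g} := by
    simp [Matrix.range_cons, Matrix.range_empty, Set.pair_comm]
  rw [hrange] at hcard
  simpa using hcard

lemma forward_span (G : Subgroup SL)
    (hab : ∀ a ∈ G, ∀ b ∈ G, a * b = b * a)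
    (g : SL) (hgG : g ∈ G) (hgns : ∀ c : ℂ, (g : Mat) ≠ c • (1 : Mat))
    (H : Mat) (hherm : H.IsHermitian) (hdetH : H.det ≠ 0)
    (hinv : ∀ h ∈ G, (h : Mat)ᴴ * H * (h : Mat) = H) :
    ∀ h ∈ G, (h : Mat) ∈ Submodule.span ℝ {(1 : Mat), (g : Mat)} := by
  have hdetg : (g : Mat).det = 1 := g.prop
  have hch : (g : Mat) * (g : Mat) = (g : Mat).trace • (g : Mat) - 1 := ch2 _ hdetg
  have htr : ∀ h ∈ G, starRingEnd ℂ (Matrix.trace (h : Mat)) = Matrix.trace (h : Mat) :=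
    fun h hh => trace_real_of_unitary H hdetH h (hinv h hh)
  have htg := htr g hgG
  intro h hh
  have hcomm : (h : Mat) * (g : Mat) = (g : Mat) * (h : Mat) := by
    have := hab h hh g hgG
    calc (h : Mat) * (g : Mat) = ((h * g : SL) : Mat) := by
          rw [Matrix.SpecialLinearGroup.coe_mul]
      _ = ((g * h : SL) : Mat) := by rw [this]
      _ = (g : Mat) * (h : Mat) := by rw [Matrix.SpecialLinearGroup.coe_mul]
  obtain ⟨α, β, hαβ⟩ := centralizer (g : Mat) (h : Mat) hgns hcomm
  set t := (g : Mat).trace with htdef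
  by_cases hpar : t = 2 ∨ t = -2
  · -- parabolic case
    obtain ⟨ε, hε2, hεconj, htε⟩ : ∃ ε : ℂ, ε * ε = 1 ∧ starRingEnd ℂ ε = ε ∧ t = 2 * ε := by
      rcases hpar with h2 | h2
      · exact ⟨1, by ring, by simp, by rw [h2]; ring⟩
      · exact ⟨-1, by ring, by simp, by rw [h2]; ring⟩
    have hε0 : ε ≠ 0 := fun hc => by simp [hc] at hε2
    set N : Mat := (g : Mat) - ε • (1 : Mat) with hN
    have hNN : N * N = 0 := by
      have e : N * N = (g : Mat) * (g : Mat) - (2 * ε) • (g : Mat) + (ε * ε) • (1 : Mat) := by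
        rw [hN]
        simp only [sub_mul, mul_sub, smul_mul_assoc, mul_smul_comm, one_mul, mul_one, smul_smul]
        module
      rw [e, hch, ← htε, hε2]
      module
    have hdetN : N.det = 0 := by
      have e := congrArg Matrix.det hNN
      rw [Matrix.det_mul] at e
      simpa using mul_self_eq_zero.mp (by simpa using e)
    have htrN : N.trace = 0 := by
      have hcard : ((Fintype.card (Fin 2) : ℂ)) = 2 := by simp
      rw [hN, Matrix.trace_sub, Matrix.trace_smul, Matrix.trace_one, hcard, ← htdef, htε,
        smul_eq_mul]
      ring
    have hNne : N ≠ 0 := by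
      intro h0
      exact hgns ε (by rw [← sub_eq_zero]; exact hN ▸ h0)
    have hM0 : H * N ≠ 0 := by
      intro h0
      apply hNne
      have : N = H⁻¹ * (H * N) := by
        rw [← mul_assoc, Matrix.nonsing_inv_mul H (isUnit_iff_ne_zero.mpr hdetH), one_mul]
      rw [this, h0, mul_zero]
    have rel : ∀ a b : ℂ, starRingEnd ℂ a = a → a * a = 1 →
        (a • (1 : Mat) + b • N)ᴴ * H * (a • (1 : Mat) + b • N) = H →
        (a * b) • (H * N) + (a * starRingEnd ℂ b) • (Nᴴ * H)
          + (b * starRingEnd ℂ b) • (Nᴴ * H * N) = 0 := by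
      intro a b ha ha2 hrel
      have hct : (a • (1 : Mat) + b • N)ᴴ = a • (1 : Mat) + (starRingEnd ℂ b) • Nᴴ := by
        simp [Matrix.conjTranspose_add, Matrix.conjTranspose_smul, Matrix.conjTranspose_one,
          Complex.star_def, ha]
      rw [hct] at hrel
      have expand : (a • (1 : Mat) + (starRingEnd ℂ b) • Nᴴ) * H * (a • (1 : Mat) + b • N)
          = (a * a) • H + (a * b) • (H * N) + (a * starRingEnd ℂ b) • (Nᴴ * H)
            + (b * starRingEnd ℂ b) • (Nᴴ * H * N) := by
        simp only [add_mul, mul_add, smul_mul_assoc, mul_smul_comm, mul_one, one_mul, smul_smul,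
          mul_assoc]
        module
      rw [expand, ha2, one_smul] at hrel
      have e0 : (a * b) • (H * N) + (a * starRingEnd ℂ b) • (Nᴴ * H)
          + (b * starRingEnd ℂ b) • (Nᴴ * H * N)
          = (H + (a * b) • (H * N) + (a * starRingEnd ℂ b) • (Nᴴ * H)
            + (b * starRingEnd ℂ b) • (Nᴴ * H * N)) - H := by abel
      rw [e0, hrel, sub_self]
    have hgdec : (g : Mat) = ε • (1 : Mat) + (1 : ℂ) • N := by
      rw [hN, one_smul]; abel
    have relg := rel ε 1 hεconj hε2 (by rw [← hgdec]; exact hinv g hgG)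
    simp only [mul_one, _root_.map_one, one_mul, one_smul] at relg
    -- relg : ε • (H*N) + ε • (Nᴴ*H) + Nᴴ*H*N = 0
    have hdec : (h : Mat) = (α + β * ε) • (1 : Mat) + β • N := by
      rw [hαβ, hN, smul_sub, smul_smul]
      match_scalars <;> ring
    have hdeth : ((h : Mat)).det = 1 := h.prop
    have ha2 : (α + β * ε) * (α + β * ε) = 1 := by
      have hd := det_comb (α + β * ε) β N
      rw [htrN, hdetN, ← hdec, hdeth] at hd
      linear_combination -hd
    have haconj : starRingEnd ℂ (α + β * ε) = α + β * ε := by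
      rcases mul_self_eq_one_iff.mp ha2 with h1 | h1 <;> rw [h1] <;> simp
    have ha0 : (α + β * ε) ≠ 0 := by
      intro h0; rw [h0, zero_mul] at ha2; exact zero_ne_one ha2
    have relh := rel (α + β * ε) β haconj ha2 (by rw [← hdec]; exact hinv h hh)
    set a := α + β * ε with hadef
    set cb := starRingEnd ℂ β with hcb
    have hbconj : cb = β := by
      by_cases hdep : ∃ c : ℂ, Nᴴ * H = c • (H * N)
      · obtain ⟨c, hc⟩ := hdep
        have hNHN : Nᴴ * H * N = 0 := by
          rw [hc, smul_mul_assoc, mul_assoc, hNN, mul_zero, smul_zero]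
        simp only [hNHN, smul_zero, add_zero] at relg relh
        rw [hc] at relg relh
        -- relg : ε • (H*N) + ε • (c • (H*N)) = 0
        have hce : (ε * (1 + c)) • (H * N) = ε • (H * N) + ε • (c • (H * N)) := by
          rw [smul_smul]; match_scalars; ring
        have hc1 : ε * (1 + c) = 0 := by
          by_contra hne
          exact hM0 (by
            have := hce.trans relg
            exact (smul_eq_zero.mp this).resolve_left hne)
        have hcneg : c = -1 := by
          rcases mul_eq_zero.mp hc1 with hcc | hcc
          · exact absurd hcc hε0
          · linear_combination hcc
        rw [hcneg] at relh
        have hre : (a * (β - cb)) • (H * N)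
            = (a * β) • (H * N) + (a * cb) • ((-1 : ℂ) • (H * N)) := by
          rw [smul_smul]; match_scalars; ring
        have h0 : a * (β - cb) = 0 := by
          have := hre.trans relh
          exact (smul_eq_zero.mp this).resolve_right hM0
        exact (sub_eq_zero.mp ((mul_eq_zero.mp h0).resolve_left ha0)).symm
      · push_neg at hdep
        have hNHN : Nᴴ * H * N = -(ε • (H * N)) - ε • (Nᴴ * H) := by
          have e0 : Nᴴ * H * N
              = (ε • (H * N) + ε • (Nᴴ * H) + Nᴴ * H * N) - ε • (H * N) - ε • (Nᴴ * H) := by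
            abel
          rw [e0, relg]
          abel
        rw [hNHN] at relh
        have hco : a * cb - ε * (β * cb) = 0 := by
          by_contra hco
          apply hdep ((a * cb - ε * (β * cb))⁻¹ * (-(a * β - ε * (β * cb))))
          have e1 : (a * cb - ε * (β * cb)) • (Nᴴ * H) + (a * β - ε * (β * cb)) • (H * N)
              = (a * β) • (H * N) + (a * cb) • (Nᴴ * H)
                + (β * cb) • (-(ε • (H * N)) - ε • (Nᴴ * H)) := by
            match_scalars <;> ring
          have e2 := e1.trans relh
          have e3 : (a * cb - ε * (β * cb)) • (Nᴴ * H)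
              = (-(a * β - ε * (β * cb))) • (H * N) := by
            rw [neg_smul]
            exact eq_neg_of_add_eq_zero_left e2
          have e4 := congrArg (fun M => (a * cb - ε * (β * cb))⁻¹ • M) e3
          rwa [inv_smul_smul₀ hco, smul_smul] at e4
        have h1 : (a * β - ε * (β * cb)) • (H * N) = 0 := by
          have e1 : (a * β - ε * (β * cb)) • (H * N)
              = ((a * β) • (H * N) + (a * cb) • (Nᴴ * H)
                  + (β * cb) • (-(ε • (H * N)) - ε • (Nᴴ * H)))
                - (a * cb - ε * (β * cb)) • (Nᴴ * H) := by
            match_scalars <;> ring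
          rw [e1, relh, hco, zero_smul, zero_sub, neg_zero]
        have h2 : a * β - ε * (β * cb) = 0 := (smul_eq_zero.mp h1).resolve_right hM0
        have h3 : a * (β - cb) = 0 := by linear_combination h2 - hco
        exact (sub_eq_zero.mp ((mul_eq_zero.mp h3).resolve_left ha0)).symm
    have hβre : ((β.re : ℝ) : ℂ) = β := Complex.conj_eq_iff_re.mp (hcb.symm.trans hbconj)
    have hαconj : starRingEnd ℂ α = α := by
      have hα' : α = a - β * ε := by rw [hadef]; ring
      rw [hα', _root_.map_sub, _root_.map_mul, haconj, hcb.symm.trans hbconj, hεconj]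
    exact Submodule.mem_span_pair.mpr ⟨α.re, β.re, by
      rw [rsmul, rsmul, Complex.conj_eq_iff_re.mp hαconj, hβre]
      exact hαβ.symm⟩
  · -- generic case
    push_neg at hpar
    have hΔ : t * t - 4 ≠ 0 := by
      intro hcc
      have hf : (t - 2) * (t + 2) = 0 := by linear_combination hcc
      rcases mul_eq_zero.mp hf with hcc2 | hcc2
      · exact hpar.1 (by linear_combination hcc2)
      · exact hpar.2 (by linear_combination hcc2)
    have hcard : ((Fintype.card (Fin 2) : ℂ)) = 2 := by simp
    have h1 := htr h hh
    have h2 := htr (h * g) (mul_mem hh hgG)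
    have htraceh : Matrix.trace ((h : Mat)) = 2 * α + β * t := by
      rw [hαβ, Matrix.trace_add, Matrix.trace_smul, Matrix.trace_smul, Matrix.trace_one, hcard,
        ← htdef, smul_eq_mul, smul_eq_mul]
      ring
    have hthg : Matrix.trace (((h * g : SL)) : Mat) = α * t + β * (t * t - 2) := by
      rw [Matrix.SpecialLinearGroup.coe_mul, hαβ, add_mul, smul_mul_assoc, one_mul,
        smul_mul_assoc, hch]
      simp only [Matrix.trace_add, Matrix.trace_smul, Matrix.trace_sub, Matrix.trace_one,
        smul_eq_mul, Fintype.card_fin, ← htdef]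
      push_cast
      ring
    rw [htraceh] at h1
    rw [hthg] at h2
    simp only [_root_.map_add, _root_.map_mul, _root_.map_sub, map_ofNat, htg] at h1 h2
    have hβc : starRingEnd ℂ β = β := by
      have hkey : (t * t - 4) * (starRingEnd ℂ β - β) = 0 := by
        linear_combination 2 * h2 - t * h1
      exact sub_eq_zero.mp ((mul_eq_zero.mp hkey).resolve_left hΔ)
    have hαc : starRingEnd ℂ α = α := by
      have h3 : 2 * (starRingEnd ℂ α - α) = 0 := by linear_combination h1 - t * hβc
      exact sub_eq_zero.mp ((mul_eq_zero.mp h3).resolve_left two_ne_zero)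
    exact Submodule.mem_span_pair.mpr ⟨α.re, β.re, by
      rw [rsmul, rsmul, Complex.conj_eq_iff_re.mp hαc, Complex.conj_eq_iff_re.mp hβc]
      exact hαβ.symm⟩

/-- An abelian subgroup of `SL(2,ℂ)` containing a non-scalar element is unitary iff the
real algebra it generates has dimension 2. -/
theorem abelian_unitary_iff_dim_two
    (G : Subgroup (Matrix.SpecialLinearGroup (Fin 2) ℂ))
    (hab : ∀ a ∈ G, ∀ b ∈ G, a * b = b * a)
    (hns : ∃ g ∈ G, ∀ c : ℂ, (g : Matrix (Fin 2) (Fin 2) ℂ) ≠ c • (1 : Matrix (Fin 2) (Fin 2) ℂ)) :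
    IsUnitarySubgroup G ↔
      Module.finrank ℝ
        (Algebra.adjoin ℝ
          ((fun g : Matrix.SpecialLinearGroup (Fin 2) ℂ => (g : Matrix (Fin 2) (Fin 2) ℂ)) ''
            (G : Set (Matrix.SpecialLinearGroup (Fin 2) ℂ)))) = 2 := by
  obtain ⟨g, hgG, hgns⟩ := hns
  have hdetg : (g : Mat).det = 1 := g.prop
  set S : Set Mat := ((fun x : SL => (x : Mat)) '' (G : Set SL)) with hS
  have hgS : (g : Mat) ∈ S := ⟨g, hgG, rfl⟩
  have hspan_le : Submodule.span ℝ {(1 : Mat), (g : Mat)}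
      ≤ Subalgebra.toSubmodule (Algebra.adjoin ℝ S) := by
    rw [Submodule.span_le]
    intro x hx
    rcases Set.mem_insert_iff.mp hx with rfl | hx
    · exact Subalgebra.mem_toSubmodule _ |>.mpr (one_mem _)
    · rw [Set.mem_singleton_iff] at hx
      subst hx
      exact Subalgebra.mem_toSubmodule _ |>.mpr (Algebra.subset_adjoin hgS)
  constructor
  · rintro ⟨H, hherm, hdetH, hinv⟩
    have hmem := forward_span G hab g hgG hgns H hherm hdetH hinv
    have htg : starRingEnd ℂ ((g : Mat)).trace = ((g : Mat)).trace :=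
      trace_real_of_unitary H hdetH g (hinv g hgG)
    have hle : Algebra.adjoin ℝ S ≤
        Submodule.toSubalgebra (Submodule.span ℝ {(1 : Mat), (g : Mat)})
          (Submodule.subset_span (by simp)) (span_pair_mul_closed (g : Mat) hdetg htg) := by
      apply Algebra.adjoin_le
      rintro x ⟨h, hh, rfl⟩
      exact hmem h hh
    have heq : Subalgebra.toSubmodule (Algebra.adjoin ℝ S)
        = Submodule.span ℝ {(1 : Mat), (g : Mat)} := by
      apply le_antisymm ?_ hspan_le
      intro x hx
      have := hle ((Subalgebra.mem_toSubmodule _).mp hx)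
      exact (Submodule.mem_toSubalgebra).mp this
    have hfr : Module.finrank ℝ (Subalgebra.toSubmodule (Algebra.adjoin ℝ S))
        = Module.finrank ℝ (Submodule.span ℝ {(1 : Mat), (g : Mat)}) := by rw [heq]
    rw [show Module.finrank ℝ (Algebra.adjoin ℝ S)
        = Module.finrank ℝ (Subalgebra.toSubmodule (Algebra.adjoin ℝ S)) from rfl, hfr]
    exact finrank_span_pair _ hgns
  · intro hdim
    have h2 : Module.finrank ℝ ↥(Submodule.span ℝ {(1 : Mat), (g : Mat)}) = 2 :=
      finrank_span_pair _ hgns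
    have heq : Submodule.span ℝ {(1 : Mat), (g : Mat)}
        = Subalgebra.toSubmodule (Algebra.adjoin ℝ S) := by
      apply Submodule.eq_of_le_of_finrank_le hspan_le
      rw [h2]
      rw [show Module.finrank ℝ (Subalgebra.toSubmodule (Algebra.adjoin ℝ S))
        = Module.finrank ℝ (Algebra.adjoin ℝ S) from rfl, hdim]
    have hmemspan : ∀ h ∈ G, (h : Mat) ∈ Submodule.span ℝ {(1 : Mat), (g : Mat)} := by
      intro h hh
      rw [heq]
      exact (Subalgebra.mem_toSubmodule _).mpr (Algebra.subset_adjoin ⟨h, hh, rfl⟩)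
    have hch0 : (g : Mat) * (g : Mat) = ((g : Mat)).trace • (g : Mat) - 1 := ch2 _ hdetg
    have hgg : (g : Mat) * (g : Mat) ∈ Submodule.span ℝ {(1 : Mat), (g : Mat)} := by
      rw [heq]
      exact (Subalgebra.mem_toSubmodule _).mpr
        (mul_mem (Algebra.subset_adjoin hgS) (Algebra.subset_adjoin hgS))
    obtain ⟨a, b, hab2⟩ := Submodule.mem_span_pair.mp hgg
    have htg : starRingEnd ℂ ((g : Mat)).trace = ((g : Mat)).trace := by
      have hbt : ((g : Mat)).trace = (b : ℂ) := by
        by_contra hne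
        have hne' : ((g : Mat)).trace - (b : ℂ) ≠ 0 := sub_ne_zero.mpr hne
        apply hgns ((((g : Mat)).trace - (b : ℂ))⁻¹ * ((a : ℂ) + 1))
        rw [rsmul, rsmul, hch0] at hab2
        have e : (((g : Mat)).trace - (b : ℂ)) • (g : Mat) - ((a : ℂ) + 1) • (1 : Mat)
            = (((g : Mat)).trace • (g : Mat) - 1) - ((a : ℂ) • (1 : Mat) + (b : ℂ) • (g : Mat)) := by
          match_scalars <;> ring
        rw [hab2, sub_self] at e
        have e2 := sub_eq_zero.mp e
        have e3 := congrArg (fun M => ((((g : Mat)).trace - (b : ℂ)))⁻¹ • M) e2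
        rwa [inv_smul_smul₀ hne', smul_smul] at e3
      rw [hbt]
      exact Complex.conj_ofReal b
    obtain ⟨H, hherm, hdetH, hinvg⟩ := exists_H (g : Mat) hdetg hgns htg
    refine ⟨H, hherm, hdetH, ?_⟩
    intro h hh
    obtain ⟨x, y, hxy⟩ := Submodule.mem_span_pair.mp (hmemspan h hh)
    rw [rsmul, rsmul] at hxy
    have hdeth : ((h : Mat)).det = 1 := h.prop
    have hdc : (x : ℂ) * x + (x : ℂ) * y * ((g : Mat)).trace + (y : ℂ) * y = 1 := by
      have hd := det_comb (x : ℂ) (y : ℂ) (g : Mat)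
      rw [hxy, hdeth, hdetg, mul_one] at hd
      linear_combination -hd
    have := unit_extend (g : Mat) H ((g : Mat)).trace (x : ℂ) (y : ℂ) hch0 hinvg
      (Complex.conj_ofReal x) (Complex.conj_ofReal y) hdc
    rwa [hxy] at this
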